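/- Fix m ≥ 3 and work with m×m real matrices. For 2 ≤ i ≤ m−1 set u_i(t) = x_i(t)·y_{i−1}(t). Then: (0) x_i(t)·y_{i−1}(t) = y_{i−1}(t)·x_i(t), so u_i(t) = Id + t·(E_{i,i+1} + E_{i,i−1}); (1) u_i(a)·u_i(b) = u_i(a+b) for all reals a,b; (2) u_i(a)·u_j(b) = u_j(b)·u_i(a) whenever 2 ≤ i, j ≤ m−1 and |i−j| ≥ 2; (3) if 2 ≤ i and i+1 ≤ m−1 and a+c+abc ≠ 0, then u_i(a)·u_{i+1}(b)·u_i(c) = u_{i+1}(bc/(a+c+abc))·u_i(a+c+abc)·u_{i+1}(ab/(a+c+abc)), and likewise u_{i+1}(a)·u_i(b)·u_{i+1}(c) = u_i(bc/(a+c+abc))·u_{i+1}(a+c+abc)·u_i(ab/(a+c+abc)). -/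

import Mathlib

open Finset

noncomputable section
open scoped Classical

/-- The cyclic (clockwise) half-open interval `(a, b]` in `Fin m`. -/
def cIoc {m : ℕ} (a b : Fin m) : Finset (Fin m) :=
  univ.filter fun k => if a < b then a < k ∧ k ≤ b else a < k ∨ k ≤ b

/-- The open cyclic (clockwise) arc from `a` to `b` in `Fin m`, excluding both endpoints. -/
def cIoo {m : ℕ} (a b : Fin m) : Finset (Fin m) :=
  univ.filter fun k => if a < b then a < k ∧ k < b else (a < k ∨ k < b) ∧ k ≠ a ∧ k ≠ b

/-- Set partitions of `[n] = Fin n`. -/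
abbrev NCP (n : ℕ) := Finpartition (univ : Finset (Fin n))

/-- `a` and `b` lie in the same block of `σ`. -/
def sameBlock {n : ℕ} (σ : NCP n) (a b : Fin n) : Prop :=
  ∃ B ∈ σ.parts, a ∈ B ∧ b ∈ B

/-- `σ` is a noncrossing partition: there are no `a < b < c < d` with `a, c` in one
block and `b, d` in a different block. -/
def IsNoncrossing {n : ℕ} (σ : NCP n) : Prop :=
  ∀ a b c d : Fin n, a < b → b < c → c < d →
    sameBlock σ a c → sameBlock σ b d → sameBlock σ a b

/-- The relation defining the dual (Kreweras complement) partition: `ĩ ~ j̃` iff no block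
of `σ` meets both cyclic intervals `{(i+1), …, j}` and `{(j+1), …, i}`. -/
def dualRel {n : ℕ} (σ : NCP n) (i j : Fin n) : Prop :=
  i = j ∨ ¬ ∃ B ∈ σ.parts, (B ∩ cIoc i j).Nonempty ∧ (B ∩ cIoc j i).Nonempty

/-- The point `ī` of `[2n]` (0-based: `ī = 2i`). -/
def bar {n : ℕ} (i : Fin n) : Fin (2*n) := ⟨2*(i:ℕ), by have := i.isLt; omega⟩

/-- The point `ĩ` of `[2n]` (0-based: `ĩ = 2i+1`). -/
def til {n : ℕ} (i : Fin n) : Fin (2*n) := ⟨2*(i:ℕ)+1, by have := i.isLt; omega⟩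

/-- A matching (fixed-point-free involution) of `Fin m`. -/
def IsMatching {m : ℕ} (τ : Fin m → Fin m) : Prop :=
  Function.Involutive τ ∧ ∀ i, τ i ≠ i

/-- A noncrossing matching: there are no `a < b < c < d` with `τ a = c` and `τ b = d`. -/
def IsNCMatching {m : ℕ} (τ : Fin m → Fin m) : Prop :=
  ¬ ∃ a b c d : Fin m, a < b ∧ b < c ∧ c < d ∧ τ a = c ∧ τ b = d

/-- `j` is the cyclic predecessor of `i` in the block of `σ` containing `i`
(`j = i` when `i` is a singleton). -/
def cyclicPred {n : ℕ} (σ : NCP n) (j i : Fin n) : Prop :=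
  ∃ B ∈ σ.parts, i ∈ B ∧ j ∈ B ∧ ∀ x ∈ B, x ∉ cIoo j i

/-- `m` is the medial pairing of `σ`: it pairs `ī` (0-based `2i`) with `j̃` (0-based `2j+1`),
where `j` is the cyclic predecessor of `i` in its block. -/
def IsMedialOf {n : ℕ} (σ : NCP n) (m : Fin (2*n) → Fin (2*n)) : Prop :=
  ∀ i j : Fin n, m (bar i) = til j ↔ cyclicPred σ j i

/-- The crossing number of a matching: the number of pairs `{a,b}` with
`a < b < τ a < τ b`. -/
def crossNum {m : ℕ} (τ : Fin m → Fin m) : ℕ :=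
  ((univ : Finset (Fin m × Fin m)).filter fun p =>
    p.1 < p.2 ∧ p.2 < τ p.1 ∧ τ p.1 < τ p.2).card

/-- `a`, `b`, `c`, `d` are distinct and in cyclic order on `Fin m`. -/
def CyclicOrder4 {m : ℕ} (a b c d : Fin m) : Prop :=
  (a < b ∧ b < c ∧ c < d) ∨ (b < c ∧ c < d ∧ d < a) ∨
  (c < d ∧ d < a ∧ a < b) ∨ (d < a ∧ a < b ∧ b < c)

/-- `τ` covers `τ'` in the uncrossing order. -/
def UncrossCover {m : ℕ} (τ' τ : Fin m → Fin m) : Prop :=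
  IsMatching τ' ∧ IsMatching τ ∧
  ∃ a b c d : Fin m, CyclicOrder4 a b c d ∧ τ a = c ∧ τ b = d ∧
    (∀ x, x ≠ a → x ≠ b → x ≠ c → x ≠ d → τ' x = τ x) ∧
    ((τ' a = d ∧ τ' b = c ∧ ∀ x ∈ cIoo a b, τ x ∉ cIoo c d) ∨
     (τ' a = b ∧ τ' c = d ∧ ∀ x ∈ cIoo b c, τ x ∉ cIoo d a))

/-- The uncrossing partial order on matchings: reflexive-transitive closure of covers. -/
def uncrossLE {m : ℕ} (τ' τ : Fin m → Fin m) : Prop :=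
  Relation.ReflTransGen UncrossCover τ' τ

/-- An affine permutation of period `m`. -/
def IsAffinePerm (m : ℕ) (f : ℤ → ℤ) : Prop :=
  Function.Bijective f ∧ ∀ i : ℤ, f (i + m) = f i + m

/-- The length of an affine permutation of period `m`:
`#{(i,j) : 1 ≤ i ≤ m, i < j, f i > f j}`. -/
def affLen (m : ℕ) (f : ℤ → ℤ) : ℕ :=
  Set.ncard {p : ℤ × ℤ | 1 ≤ p.1 ∧ p.1 ≤ (m:ℤ) ∧ p.1 < p.2 ∧ f p.2 < f p.1}

/-- The affine rank matrix `r_f(i,j) = #{a ≤ i : f a ≥ j}`. -/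
def rankMat (f : ℤ → ℤ) (i j : ℤ) : ℕ :=
  Set.ncard {a : ℤ | a ≤ i ∧ j ≤ f a}

/-- Affine Bruhat order via rank matrices. -/
def bruhatLE (f g : ℤ → ℤ) : Prop := ∀ i j : ℤ, rankMat f i j ≤ rankMat g i j

/-- The sum `Σ_{i=1}^m (f i − i)`. -/
def windowSum (m : ℕ) (f : ℤ → ℤ) : ℤ :=
  ∑ i ∈ Finset.range m, (f ((i:ℤ)+1) - ((i:ℤ)+1))

/-- The affine permutation `g_τ` associated to a matching `τ` of `[2n]`:
on `[2n]`, `g_τ i = τ i` if `τ i > i` and `g_τ i = τ i + 2n` if `τ i < i`,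
extended periodically. -/
def gTau (n : ℕ) (τ : Fin (2*n) → Fin (2*n)) (i : ℤ) : ℤ :=
  if h : (i % ((2*n : ℕ) : ℤ)).toNat < 2*n then
    let r : Fin (2*n) := ⟨(i % ((2*n : ℕ) : ℤ)).toNat, h⟩
    (i - i % ((2*n : ℕ) : ℤ)) +
      (if r < τ r then ((τ r : ℕ) : ℤ) else ((τ r : ℕ) : ℤ) + 2*n)
  else i

/-- `f_τ = g_τ − 1`. -/
def fTau (n : ℕ) (τ : Fin (2*n) → Fin (2*n)) (i : ℤ) : ℤ := gTau n τ i - 1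

/-- An electrical affine permutation for `n`. -/
def IsElectrical (n : ℕ) (f : ℤ → ℤ) : Prop :=
  IsAffinePerm (2*n) f ∧
  (∀ i : ℤ, i ≤ f i ∧ f i ≤ i + 2*n - 2) ∧
  windowSum (2*n) f = ((n:ℤ) - 1) * (2*n) ∧
  ∀ i : ℤ, (f (f i + 1) - (i - 1)) % ((2*n : ℕ) : ℤ) = 0

/-- The Grassmann necklace subset `I_a(f) ⊆ [m]`: representatives in `[m]` (0-based) of
`{f b mod m : b < a and f b ≥ a}`. -/
def necklaceI (m : ℕ) (f : ℤ → ℤ) (a : ℤ) : Finset (Fin m) :=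
  univ.filter fun x => ∃ b : ℤ, b < a ∧ a ≤ f b ∧ f b % (m:ℤ) = ((x:ℕ):ℤ)

/-- The dual necklace subset `J_a(f) ⊆ [m]`: representatives in `[m]` (0-based) of
`{b mod m : b < a and f b ≥ a}`. -/
def necklaceJ (m : ℕ) (f : ℤ → ℤ) (a : ℤ) : Finset (Fin m) :=
  univ.filter fun x => ∃ b : ℤ, b < a ∧ a ≤ f b ∧ b % (m:ℤ) = ((x:ℕ):ℤ)

/-- Dominance order on `k`-element subsets of `Fin m`:
the `r`-th smallest element of `I` is at most the `r`-th smallest element of `J`. -/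
def domLE {m : ℕ} (k : ℕ) (I J : Finset (Fin m)) : Prop :=
  ∃ (hI : I.card = k) (hJ : J.card = k),
    ∀ r : Fin k, I.orderEmbOfFin hI r ≤ J.orderEmbOfFin hJ r

/-- `a`-shifted dominance order: rotate so that `a` becomes least, then compare. -/
def sdomLE {m : ℕ} (k : ℕ) (a : Fin m) (I J : Finset (Fin m)) : Prop :=
  domLE k (I.image (· - a)) (J.image (· - a))

/-- `a`-shifted lexicographic order on subsets of `Fin m`. -/
def lexLE {m : ℕ} (a : Fin m) (I J : Finset (Fin m)) : Prop :=
  I = J ∨ List.Lex (· < ·) ((I.image (· - a)).sort (· ≤ ·)) ((J.image (· - a)).sort (· ≤ ·))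

/-- A Catalan subset of `[2n]` (0-based): an `(n−1)`-subset such that the length-`2n`
word with `U` at positions `{0} ∪ {x+1 : x ∈ I}` and `D` elsewhere is a Dyck path. -/
def IsCatalan {n : ℕ} (I : Finset (Fin (2*n))) : Prop :=
  I.card = n - 1 ∧
  ∀ p : ℕ, p ≤ 2*n →
    p ≤ 2 * ((insert 0 (I.image fun x => (x:ℕ)+1)).filter (· < p)).card

/-- Catalan subset with respect to the shifted order `≤_a`. -/
def IsCatalanAt {n : ℕ} (a : Fin (2*n)) (I : Finset (Fin (2*n))) : Prop :=
  IsCatalan (I.image (· - a))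

/-- The set of maxima of `S` with respect to the `a`-shifted order. -/
def maxAt {m : ℕ} (a : Fin m) (S : Finset (Fin m)) : Finset (Fin m) :=
  S.filter fun x => ∀ y ∈ S, y - a ≤ x - a

/-- `I_a(σ)` for a noncrossing partition `σ`: the complement in `[2n]` of the set of
`≤_a`-maxima of the blocks of `σ` (embedded by `bar`) and of the blocks of the dual
partition `σ̃` (embedded by `til`). -/
def IaP {n : ℕ} (σ : NCP n) (a : Fin (2*n)) : Finset (Fin (2*n)) :=
  univ \ ((σ.parts.biUnion fun B => maxAt a (B.image bar)) ∪
          ((univ : Finset (Fin n)).biUnion fun i =>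
            maxAt a ((univ.filter (dualRel σ i)).image til)))

/-- `I` is concordant with `σ`: `I` has `n−1` elements and every block of `σ` and of
its dual `σ̃` contains exactly one element of `[2n] ∖ I`. -/
def Concordant {n : ℕ} (σ : NCP n) (I : Finset (Fin (2*n))) : Prop :=
  I.card = n - 1 ∧
  (∀ B ∈ σ.parts, ((B.image bar) ∩ (univ \ I)).card = 1) ∧
  (∀ i : Fin n, (((univ.filter (dualRel σ i)).image til) ∩ (univ \ I)).card = 1)

/-- `E(I)`: the set of noncrossing partitions concordant with `I`. -/
def ESet {n : ℕ} (I : Finset (Fin (2*n))) : Set (NCP n) :=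
  {σ | IsNoncrossing σ ∧ Concordant σ I}

/-- The maximal minor `Δ_I(X)` on the columns indexed by `I`, in increasing order. -/
def minorOn {k m : ℕ} (X : Matrix (Fin k) (Fin m) ℝ) (I : Finset (Fin m)) : ℝ :=
  if h : I.card = k then (X.submatrix id fun r => I.orderEmbOfFin h r).det else 0

/-- `X` is totally nonnegative: it has full rank `k` and all maximal minors are `≥ 0`. -/
def IsTNN {k m : ℕ} (X : Matrix (Fin k) (Fin m) ℝ) : Prop :=
  X.rank = k ∧ ∀ I : Finset (Fin m), I.card = k → 0 ≤ minorOn X I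

/-- `t` times the matrix unit `E_{p,q}` (0-based indices). -/
def matE (m : ℕ) (p q : ℕ) (t : ℝ) : Matrix (Fin m) (Fin m) ℝ :=
  Matrix.of fun r s => if (r:ℕ) = p ∧ (s:ℕ) = q then t else 0

/-- `x_i(t) = Id + t·E_{i,i+1}` (1-based index `i`). -/
def xB (m i : ℕ) (t : ℝ) : Matrix (Fin m) (Fin m) ℝ := 1 + matE m (i-1) i t

/-- `y_i(t) = Id + t·E_{i+1,i}` (1-based index `i`). -/
def yB (m i : ℕ) (t : ℝ) : Matrix (Fin m) (Fin m) ℝ := 1 + matE m i (i-1) t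

/-- `u_i(t) = x_i(t)·y_{i−1}(t)` (1-based index `i`). -/
def uB (m i : ℕ) (t : ℝ) : Matrix (Fin m) (Fin m) ℝ := xB m i t * yB m (i-1) t

/-- The columns of `X`, extended `n`-periodically to all integer indices (0-based). -/
def colP {k n : ℕ} (X : Matrix (Fin k) (Fin n) ℝ) (i : ℤ) : Fin k → ℝ :=
  fun r => if h : (i % (n:ℤ)).toNat < n then X r ⟨(i % (n:ℤ)).toNat, h⟩ else 0

/-- `f_X(i) = min { j ≥ i : v_i ∈ span(v_{i+1}, …, v_j) }` (0-based columns). -/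
def fX {k n : ℕ} (X : Matrix (Fin k) (Fin n) ℝ) (i : ℤ) : ℤ :=
  sInf {j : ℤ | i ≤ j ∧ colP X i ∈ Submodule.span ℝ (colP X '' Set.Ioc i j)}

/-- Fintype instance for finite partitions of a finite set. -/
instance {α : Type*} [DecidableEq α] [Fintype α] (s : Finset α) : Fintype (Finpartition s) :=
  Fintype.ofInjective Finpartition.parts fun _ _ h => Finpartition.ext h

/-- The sorted list of (the values of) a subset of `Fin m`. -/
def sortedL {m : ℕ} (I : Finset (Fin m)) : List ℕ :=
  (I.sort (· ≤ ·)).map Fin.val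

/-- The number of inversions of a list (= the number of adjacent transpositions
needed to sort it, when entries are distinct). -/
def invNum (l : List ℕ) : ℕ :=
  ((Finset.range l.length ×ˢ Finset.range l.length).filter fun pq =>
    pq.1 < pq.2 ∧ l.getD pq.2 0 < l.getD pq.1 0).card

/-- The subset of `Fin m` whose values lie in the list `l`. -/
def toFinF {m : ℕ} (l : List ℕ) : Finset (Fin m) :=
  univ.filter fun x => (x:ℕ) ∈ l

/-- The double sum `Σ_{σ ∈ E(l), κ ∈ E(l')} L σ · L κ`, where `E` of a list with a
repeated entry (or an out-of-range entry) is empty. -/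
def pairSum {n : ℕ} (L : NCP n → ℝ) (l l' : List ℕ) : ℝ :=
  if (l.Nodup ∧ ∀ x ∈ l, x < 2*n) ∧ (l'.Nodup ∧ ∀ x ∈ l', x < 2*n) then
    ∑ᶠ σ ∈ ESet (n := n) (toFinF l), ∑ᶠ κ ∈ ESet (n := n) (toFinF l'), L σ * L κ
  else 0

/-- The list obtained from `LI` by replacing its entries at the positions in `S`
(in increasing order of position) by the first `#S` entries of `LJ`. -/
def swapI (LI LJ : List ℕ) (S : Finset ℕ) : List ℕ :=
  (List.range LI.length).map fun p =>
    if p ∈ S then LJ.getD ((S.filter (· < p)).card) 0 else LI.getD p 0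

/-- The list obtained from `LJ` by replacing its first `#S` entries by the entries of
`LI` at the positions in `S`, in increasing order. -/
def swapJ (LI LJ : List ℕ) (S : Finset ℕ) : List ℕ :=
  (List.range LJ.length).map fun p =>
    if p < S.card then LI.getD ((S.sort (· ≤ ·)).getD p 0) 0 else LJ.getD p 0

def Eb (m p q : ℕ) : Matrix (Fin m) (Fin m) ℝ := matE m p q 1

lemma matE_smul (m p q : ℕ) (t : ℝ) : matE m p q t = t • Eb m p q := by
  ext x y
  simp only [matE, Eb, Matrix.of_apply, Matrix.smul_apply, smul_eq_mul]
  split_ifs <;> simp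

lemma matE_mul_of_ne {m p q r s : ℕ} (t u : ℝ) (h : q ≠ r) :
    matE m p q t * matE m r s u = 0 := by
  ext x y
  simp only [matE, Matrix.mul_apply, Matrix.of_apply, Matrix.zero_apply]
  apply Finset.sum_eq_zero
  intro k _
  split_ifs with h1 h2 <;> simp_all

lemma matE_mul_of_eq {m p q s : ℕ} (t u : ℝ) (hq : q < m) :
    matE m p q t * matE m q s u = matE m p s (t*u) := by
  ext x y
  simp only [matE, Matrix.mul_apply, Matrix.of_apply]
  rw [Finset.sum_eq_single (⟨q, hq⟩ : Fin m)]
  · split_ifs <;> simp_all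
  · intro k _ hk
    have : (k : ℕ) ≠ q := fun hkq => hk (Fin.ext hkq)
    split_ifs <;> simp_all
  · simp

lemma uB_eq {m i : ℕ} (h2 : 2 ≤ i) (him : i < m) (t : ℝ) :
    uB m i t = 1 + matE m (i-1) i t + matE m (i-1) (i-2) t := by
  have h : i - 1 - 1 = i - 2 := by omega
  have hz : matE m (i-1) i t * matE m (i-1) (i-2) t = 0 :=
    matE_mul_of_ne t t (by omega)
  unfold uB xB yB
  rw [h]
  simp only [mul_add, add_mul, mul_one, one_mul, hz, add_zero]

lemma uB_succ {m i : ℕ} (h2 : 2 ≤ i) (him : i + 1 < m) (t : ℝ) :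
    uB m (i+1) t = 1 + matE m i (i+1) t + matE m i (i-1) t := by
  have := uB_eq (i := i+1) (by omega) him t
  simpa [Nat.add_sub_cancel, show i+1-2 = i-1 from by omega] using this

lemma uB3 {m i : ℕ} (h2 : 2 ≤ i) (him : i + 1 < m) (a b c : ℝ) :
    uB m i a * uB m (i+1) b * uB m i c =
      1 + matE m (i-1) i (a+c+a*b*c) + matE m (i-1) (i-2) (a+c+a*b*c)
        + matE m i (i+1) b + matE m i (i-1) b
        + matE m (i-1) (i+1) (a*b) + matE m (i-1) (i-1) (a*b)
        + matE m i i (b*c) + matE m i (i-2) (b*c) := by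
  rw [uB_eq h2 (by omega) a, uB_eq h2 (by omega) c, uB_succ h2 him b]
  have p1 : matE m (i-1) i a * matE m i (i+1) b = matE m (i-1) (i+1) (a*b) :=
    matE_mul_of_eq _ _ (by omega)
  have p2 : matE m (i-1) i a * matE m i (i-1) b = matE m (i-1) (i-1) (a*b) :=
    matE_mul_of_eq _ _ (by omega)
  have z1 : matE m (i-1) (i-2) a * matE m i (i+1) b = 0 := matE_mul_of_ne _ _ (by omega)
  have z2 : matE m (i-1) (i-2) a * matE m i (i-1) b = 0 := matE_mul_of_ne _ _ (by omega)
  have z3 : matE m (i-1) i a * matE m (i-1) i c = 0 := matE_mul_of_ne _ _ (by omega)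
  have z4 : matE m (i-1) i a * matE m (i-1) (i-2) c = 0 := matE_mul_of_ne _ _ (by omega)
  have z5 : matE m (i-1) (i-2) a * matE m (i-1) i c = 0 := matE_mul_of_ne _ _ (by omega)
  have z6 : matE m (i-1) (i-2) a * matE m (i-1) (i-2) c = 0 := matE_mul_of_ne _ _ (by omega)
  have z7 : matE m i (i+1) b * matE m (i-1) i c = 0 := matE_mul_of_ne _ _ (by omega)
  have z8 : matE m i (i+1) b * matE m (i-1) (i-2) c = 0 := matE_mul_of_ne _ _ (by omega)
  have p3 : matE m i (i-1) b * matE m (i-1) i c = matE m i i (b*c) :=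
    matE_mul_of_eq _ _ (by omega)
  have p4 : matE m i (i-1) b * matE m (i-1) (i-2) c = matE m i (i-2) (b*c) :=
    matE_mul_of_eq _ _ (by omega)
  have t1 : matE m (i-1) (i+1) (a*b) * matE m (i-1) i c = 0 := matE_mul_of_ne _ _ (by omega)
  have t2 : matE m (i-1) (i+1) (a*b) * matE m (i-1) (i-2) c = 0 := matE_mul_of_ne _ _ (by omega)
  have t3 : matE m (i-1) (i-1) (a*b) * matE m (i-1) i c = matE m (i-1) i (a*b*c) :=
    matE_mul_of_eq _ _ (by omega)
  have t4 : matE m (i-1) (i-1) (a*b) * matE m (i-1) (i-2) c = matE m (i-1) (i-2) (a*b*c) :=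
    matE_mul_of_eq _ _ (by omega)
  simp only [mul_add, add_mul, mul_one, one_mul, p1, p2, z1, z2, z3, z4, z5, z6, z7, z8,
    p3, p4, t1, t2, t3, t4, add_zero, zero_add, zero_mul, mul_zero]
  simp only [matE_smul]
  module

lemma uB3' {m i : ℕ} (h2 : 2 ≤ i) (him : i + 1 < m) (a b c : ℝ) :
    uB m (i+1) a * uB m i b * uB m (i+1) c =
      1 + matE m i (i+1) (a+c+a*b*c) + matE m i (i-1) (a+c+a*b*c)
        + matE m (i-1) i b + matE m (i-1) (i-2) b
        + matE m (i-1) (i+1) (b*c) + matE m (i-1) (i-1) (b*c)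
        + matE m i i (a*b) + matE m i (i-2) (a*b) := by
  rw [uB_succ h2 him a, uB_succ h2 him c, uB_eq h2 (by omega) b]
  have z1 : matE m i (i+1) a * matE m (i-1) i b = 0 := matE_mul_of_ne _ _ (by omega)
  have z2 : matE m i (i+1) a * matE m (i-1) (i-2) b = 0 := matE_mul_of_ne _ _ (by omega)
  have p1 : matE m i (i-1) a * matE m (i-1) i b = matE m i i (a*b) :=
    matE_mul_of_eq _ _ (by omega)
  have p2 : matE m i (i-1) a * matE m (i-1) (i-2) b = matE m i (i-2) (a*b) :=
    matE_mul_of_eq _ _ (by omega)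
  have z3 : matE m i (i+1) a * matE m i (i+1) c = 0 := matE_mul_of_ne _ _ (by omega)
  have z4 : matE m i (i+1) a * matE m i (i-1) c = 0 := matE_mul_of_ne _ _ (by omega)
  have z5 : matE m i (i-1) a * matE m i (i+1) c = 0 := matE_mul_of_ne _ _ (by omega)
  have z6 : matE m i (i-1) a * matE m i (i-1) c = 0 := matE_mul_of_ne _ _ (by omega)
  have p3 : matE m (i-1) i b * matE m i (i+1) c = matE m (i-1) (i+1) (b*c) :=
    matE_mul_of_eq _ _ (by omega)
  have p4 : matE m (i-1) i b * matE m i (i-1) c = matE m (i-1) (i-1) (b*c) :=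
    matE_mul_of_eq _ _ (by omega)
  have z7 : matE m (i-1) (i-2) b * matE m i (i+1) c = 0 := matE_mul_of_ne _ _ (by omega)
  have z8 : matE m (i-1) (i-2) b * matE m i (i-1) c = 0 := matE_mul_of_ne _ _ (by omega)
  have t1 : matE m i i (a*b) * matE m i (i+1) c = matE m i (i+1) (a*b*c) :=
    matE_mul_of_eq _ _ (by omega)
  have t2 : matE m i i (a*b) * matE m i (i-1) c = matE m i (i-1) (a*b*c) :=
    matE_mul_of_eq _ _ (by omega)
  have t3 : matE m i (i-2) (a*b) * matE m i (i+1) c = 0 := matE_mul_of_ne _ _ (by omega)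
  have t4 : matE m i (i-2) (a*b) * matE m i (i-1) c = 0 := matE_mul_of_ne _ _ (by omega)
  simp only [mul_add, add_mul, mul_one, one_mul, p1, p2, z1, z2, z3, z4, z5, z6, z7, z8,
    p3, p4, t1, t2, t3, t4, add_zero, zero_add, zero_mul, mul_zero]
  simp only [matE_smul]
  module

theorem stmt3 (m : ℕ) (hm : 3 ≤ m) :
    (∀ (i : ℕ) (t : ℝ), 2 ≤ i → i ≤ m - 1 →
      xB m i t * yB m (i-1) t = yB m (i-1) t * xB m i t) ∧
    (∀ (i : ℕ) (t : ℝ), 2 ≤ i → i ≤ m - 1 →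
      uB m i t = 1 + matE m (i-1) i t + matE m (i-1) (i-2) t) ∧
    (∀ (i : ℕ) (a b : ℝ), 2 ≤ i → i ≤ m - 1 →
      uB m i a * uB m i b = uB m i (a+b)) ∧
    (∀ (i j : ℕ) (a b : ℝ), 2 ≤ i → i ≤ m - 1 → 2 ≤ j → j ≤ m - 1 →
      (i + 2 ≤ j ∨ j + 2 ≤ i) →
      uB m i a * uB m j b = uB m j b * uB m i a) ∧
    (∀ (i : ℕ) (a b c : ℝ), 2 ≤ i → i + 1 ≤ m - 1 → a + c + a*b*c ≠ 0 →
      (uB m i a * uB m (i+1) b * uB m i c =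
        uB m (i+1) (b*c/(a+c+a*b*c)) * uB m i (a+c+a*b*c) * uB m (i+1) (a*b/(a+c+a*b*c))) ∧
      (uB m (i+1) a * uB m i b * uB m (i+1) c =
        uB m i (b*c/(a+c+a*b*c)) * uB m (i+1) (a+c+a*b*c) * uB m i (a*b/(a+c+a*b*c)))) := by
  refine ⟨?_, ?_, ?_, ?_, ?_⟩
  · intro i t h2 hi
    have him : i < m := by omega
    have h : i - 1 - 1 = i - 2 := by omega
    have hz : matE m (i-1) i t * matE m (i-1) (i-2) t = 0 := matE_mul_of_ne t t (by omega)
    have hz' : matE m (i-1) (i-2) t * matE m (i-1) i t = 0 := matE_mul_of_ne t t (by omega)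
    unfold xB yB
    rw [h]
    simp only [mul_add, add_mul, mul_one, one_mul, hz, hz', add_zero]
    abel
  · intro i t h2 hi
    exact uB_eq h2 (by omega) t
  · intro i a b h2 hi
    have him : i < m := by omega
    rw [uB_eq h2 him, uB_eq h2 him, uB_eq h2 him]
    have z1 : matE m (i-1) i a * matE m (i-1) i b = 0 := matE_mul_of_ne _ _ (by omega)
    have z2 : matE m (i-1) i a * matE m (i-1) (i-2) b = 0 := matE_mul_of_ne _ _ (by omega)
    have z3 : matE m (i-1) (i-2) a * matE m (i-1) i b = 0 := matE_mul_of_ne _ _ (by omega)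
    have z4 : matE m (i-1) (i-2) a * matE m (i-1) (i-2) b = 0 := matE_mul_of_ne _ _ (by omega)
    simp only [mul_add, add_mul, mul_one, one_mul, z1, z2, z3, z4, add_zero, zero_add]
    simp only [matE_smul]
    module
  · intro i j a b h2 hi hj2 hj h
    rw [uB_eq h2 (by omega), uB_eq hj2 (by omega)]
    have z1 : matE m (i-1) i a * matE m (j-1) j b = 0 := matE_mul_of_ne _ _ (by omega)
    have z2 : matE m (i-1) i a * matE m (j-1) (j-2) b = 0 := matE_mul_of_ne _ _ (by omega)
    have z3 : matE m (i-1) (i-2) a * matE m (j-1) j b = 0 := matE_mul_of_ne _ _ (by omega)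
    have z4 : matE m (i-1) (i-2) a * matE m (j-1) (j-2) b = 0 := matE_mul_of_ne _ _ (by omega)
    have z5 : matE m (j-1) j b * matE m (i-1) i a = 0 := matE_mul_of_ne _ _ (by omega)
    have z6 : matE m (j-1) j b * matE m (i-1) (i-2) a = 0 := matE_mul_of_ne _ _ (by omega)
    have z7 : matE m (j-1) (j-2) b * matE m (i-1) i a = 0 := matE_mul_of_ne _ _ (by omega)
    have z8 : matE m (j-1) (j-2) b * matE m (i-1) (i-2) a = 0 := matE_mul_of_ne _ _ (by omega)
    simp only [mul_add, add_mul, mul_one, one_mul, z1, z2, z3, z4, z5, z6, z7, z8,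
      add_zero, zero_add]
    abel
  · intro i a b c h2 hi hs
    have him : i + 1 < m := by omega
    constructor
    · rw [uB3 h2 him, uB3' h2 him]
      simp only [matE_smul]
      match_scalars <;> field_simp <;> rw [eq_div_iff (by intro h; apply hs; linarith)] <;> ring
    · rw [uB3' h2 him, uB3 h2 him]
      simp only [matE_smul]
      match_scalars <;> field_simp <;> rw [eq_div_iff (by intro h; apply hs; linarith)] <;> ring

end
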